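/- Let S be any stable matching of the marriage instance Ĝ_φ. Then: (1) S leaves s and t unmatched, contains all edges (u^ℓ_i, v^ℓ_i), and contains no consistency edge; (2) for every variable x, the gadget of ¬x is either in false state or in true state in S; (3) every gadget of an occurrence of x is either in true state or in false state in S; (4) if the gadget of ¬x is in true state in S, then all gadgets of x are in false state in S. Conversely, every matching of Ĝ_φ satisfying (1)–(4) is stable. -/

import Mathlib

open scoped Classical

namespace PopMatch

/-- A marriage/roommates instance: a vertex set with a bipartition `A`/`B`
(ignored for roommates instances) and, for each vertex, a strict preference
list over its neighbors (most preferred first).  Adjacency is given by mutual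
membership in the preference lists. -/
structure Inst (V : Type*) where
  A : Finset V
  B : Finset V
  plist : V → List V

namespace Inst

variable {V : Type*} [DecidableEq V] [Fintype V]

/-- `u` and `v` are adjacent. -/
def adj (I : Inst V) (u v : V) : Prop := v ∈ I.plist u ∧ u ∈ I.plist v

/-- `u` (strictly) prefers `v` to `w`. -/
def pref (I : Inst V) (u v w : V) : Prop :=
  v ∈ I.plist u ∧ w ∈ I.plist u ∧ (I.plist u).idxOf v < (I.plist u).idxOf w

/-- Well-formedness of an instance as a marriage instance: preference lists are
duplicate-free and symmetric, and the graph is bipartite with parts `A`, `B`. -/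
def IsValid (I : Inst V) : Prop :=
  (∀ v, (I.plist v).Nodup) ∧
  (∀ u v, v ∈ I.plist u ↔ u ∈ I.plist v) ∧
  Disjoint I.A I.B ∧
  (∀ v : V, v ∈ I.A ∨ v ∈ I.B) ∧
  (∀ u v, v ∈ I.plist u → ((u ∈ I.A ∧ v ∈ I.B) ∨ (u ∈ I.B ∧ v ∈ I.A)))

/-- A matching, encoded by its partner function. -/
def IsMatching (I : Inst V) (p : V → Option V) : Prop :=
  (∀ u v, p u = some v → p v = some u) ∧ (∀ u v, p u = some v → I.adj u v)

/-- The number of matched vertices (twice the number of edges of the matching). -/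
def msize (p : V → Option V) : ℕ := (Finset.univ.filter fun u => (p u).isSome).card

/-- Vertex `u` prefers matching `p` to matching `q`. -/
def PrefM (I : Inst V) (p q : V → Option V) (u : V) : Prop :=
  match p u, q u with
  | some _, none => True
  | some v, some w => I.pref u v w
  | none, _ => False

/-- `phi p q` = number of vertices preferring `p` to `q`. -/
noncomputable def phi (I : Inst V) (p q : V → Option V) : ℕ :=
  (Finset.univ.filter fun u => I.PrefM p q u).card

/-- `delta p q = phi p q - phi q p`. -/
noncomputable def delta (I : Inst V) (p q : V → Option V) : ℤ :=
  (I.phi p q : ℤ) - (I.phi q p : ℤ)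

/-- A popular matching: it never loses a head-to-head election. -/
def Popular (I : Inst V) (p : V → Option V) : Prop :=
  I.IsMatching p ∧ ∀ q, I.IsMatching q → 0 ≤ I.delta p q

/-- A dominant matching: a popular matching that beats every larger matching. -/
def Dominant (I : Inst V) (p : V → Option V) : Prop :=
  I.Popular p ∧ ∀ q, I.IsMatching q → msize p < msize q → 0 < I.delta p q

/-- A maximum-size popular matching. -/
def MaxPopular (I : Inst V) (p : V → Option V) : Prop :=
  I.Popular p ∧ ∀ q, I.Popular q → msize q ≤ msize p

/-- A minimum-size popular matching. -/
def MinPopular (I : Inst V) (p : V → Option V) : Prop :=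
  I.Popular p ∧ ∀ q, I.Popular q → msize p ≤ msize q

/-- `u` prefers `v` to its situation in the matching `p`
(an unmatched vertex prefers any neighbor to being unmatched). -/
def PrefOver (I : Inst V) (p : V → Option V) (u v : V) : Prop :=
  match p u with
  | none => True
  | some w => I.pref u v w

/-- The edge `(u,v)` blocks the matching `p`. -/
def Blocks (I : Inst V) (p : V → Option V) (u v : V) : Prop :=
  I.adj u v ∧ p u ≠ some v ∧ I.PrefOver p u v ∧ I.PrefOver p v u

/-- A stable matching: a matching with no blocking edge. -/
def Stable (I : Inst V) (p : V → Option V) : Prop :=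
  I.IsMatching p ∧ ∀ u v, ¬ I.Blocks p u v

/-- Adjacency in the subgraph `G_M` obtained by deleting the edges
labeled `(-,-)` with respect to the matching `p`. -/
def GMAdj (I : Inst V) (p : V → Option V) (u v : V) : Prop :=
  I.adj u v ∧ (p u = some v ∨ I.PrefOver p u v ∨ I.PrefOver p v u)

/-- `f 0, f 1, …, f n` is an augmenting path with respect to the matching `p`
inside the subgraph `G_M`: an odd number `n` of edges, alternately outside and
inside `p`, with both endpoints unmatched. -/
def IsAugPath (I : Inst V) (p : V → Option V) (n : ℕ) (f : ℕ → V) : Prop :=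
  n % 2 = 1 ∧
  (∀ i j, i ≤ n → j ≤ n → f i = f j → i = j) ∧
  (∀ i, i < n → I.GMAdj p (f i) (f (i + 1))) ∧
  (∀ i, i < n → (p (f i) = some (f (i + 1)) ↔ i % 2 = 1)) ∧
  p (f 0) = none ∧ p (f n) = none

/-- `G_M` contains an augmenting path with respect to `p`. -/
def HasAugPath (I : Inst V) (p : V → Option V) : Prop := ∃ n f, I.IsAugPath p n f

/-- `u` prefers its situation in the matching `p` to `v`. -/
def PrefSit (I : Inst V) (p : V → Option V) (u v : V) : Prop :=
  match p u with
  | none => False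
  | some w => I.pref u w v

/-- The weight `wt_p(u,v)` of an edge: `2` for a blocking edge, `-2` for a
`(-,-)` edge, `0` otherwise. -/
noncomputable def wtE (I : Inst V) (p : V → Option V) (u v : V) : ℤ :=
  if I.PrefOver p u v ∧ I.PrefOver p v u then 2
  else if I.PrefSit p u v ∧ I.PrefSit p v u then -2 else 0

/-- The weight `wt_p(u,u)` of a self-loop. -/
def wtSelf (p : V → Option V) (u : V) : ℤ := if p u = none then 0 else -1

/-- A witness (dual certificate) for the popularity of the matching `p`. -/
def IsWitness (I : Inst V) (p : V → Option V) (α : V → ℤ) : Prop :=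
  (∀ u, α u = 0 ∨ α u = 1 ∨ α u = -1) ∧
  (∑ u : V, α u) = 0 ∧
  (∀ u v, I.adj u v → I.wtE p u v ≤ α u + α v) ∧
  (∀ u : V, wtSelf p u ≤ α u)

end Inst

end PopMatch

namespace PopMatch

/-- A 3SAT formula: `m` clauses over `n` variables, each clause a nonempty
list of at most three literals (a literal is a variable together with a
polarity, `true` meaning a positive occurrence). -/
structure Formula where
  n : ℕ
  m : ℕ
  clauses : Fin m → List (Fin n × Bool)
  nonempty : ∀ i, clauses i ≠ []
  three : ∀ i, (clauses i).length ≤ 3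

namespace Formula

variable (F : Formula)

/-- The variables of the transformed formula `φ`: `X_1, …, X_{2n}`, where
`X_{n+i}` stands for `¬X_i`. -/
abbrev Var := Fin (2 * F.n)

/-- The transformed variable corresponding to a literal: `X_i ↦ X_i` and
`¬X_i ↦ X_{n+i}`. -/
def tvar (l : Fin F.n × Bool) : F.Var :=
  if l.2 then ⟨l.1.val, by have := l.1.isLt; omega⟩
  else ⟨F.n + l.1.val, by have := l.1.isLt; omega⟩

/-- The variable `X_k` (for `k < n`). -/
def varFst (k : Fin F.n) : F.Var := ⟨k.val, by have := k.isLt; omega⟩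

/-- The variable `X_{n+k}` (for `k < n`). -/
def varSnd (k : Fin F.n) : F.Var := ⟨F.n + k.val, by have := k.isLt; omega⟩

/-- The positive clauses of the transformed formula `φ`:
`C_1, …, C_m` are the original clauses with `¬X_i` replaced by `X_{n+i}`, and
`C_{m+i} = X_i ∨ X_{n+i}` for `1 ≤ i ≤ n`. -/
def posClause (i : Fin (F.m + F.n)) : List F.Var :=
  if h : i.val < F.m then (F.clauses ⟨i.val, h⟩).map F.tvar
  else [⟨i.val - F.m, by have := i.isLt; omega⟩,
        ⟨F.n + (i.val - F.m), by have := i.isLt; omega⟩]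

theorem posClause_length_le (i : Fin (F.m + F.n)) : (F.posClause i).length ≤ 3 := by
  unfold posClause
  split
  · simpa using F.three _
  · simp

theorem posClause_ne_nil (i : Fin (F.m + F.n)) : F.posClause i ≠ [] := by
  unfold posClause
  split
  · simpa using F.nonempty _
  · simp

/-- An assignment satisfies the transformed formula `φ` if every positive
clause `C_i` contains a true variable and every negative clause
`D_{m+n+i} = ¬X_i ∨ ¬X_{n+i}` contains a false one. -/
def Sat (A : F.Var → Bool) : Prop :=
  (∀ i : Fin (F.m + F.n), ∃ x ∈ F.posClause i, A x = true) ∧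
  (∀ k : Fin F.n, A (F.varFst k) = false ∨ A (F.varSnd k) = false)

/-- The index (among `1, …, n`) of the negative clause containing the unique
negated occurrence `¬x` of the variable `x`. -/
def negIdx (x : F.Var) : Fin F.n :=
  if h : x.val < F.n then ⟨x.val, h⟩
  else ⟨x.val - F.n, by have := x.isLt; omega⟩

/-- An occurrence of a (positive) literal: a positive clause index together
with a position inside that clause. -/
def Occ := {q : Fin (F.m + F.n) × Fin 3 // q.2.val < (F.posClause q.1).length}

instance : DecidableEq F.Occ := by unfold Occ; infer_instance

instance : Fintype F.Occ := by unfold Occ; exact Subtype.fintype _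

/-- The variable occurring at the occurrence `o`. -/
def litOf (o : F.Occ) : F.Var := (F.posClause o.1.1).get ⟨o.1.2.val, o.2⟩

/-- The list of all occurrences in the positive clause `i`, in clause order. -/
def occList (i : Fin (F.m + F.n)) : List F.Occ :=
  (List.finRange (F.posClause i).length).map
    (fun j => ⟨(i, ⟨j.val, lt_of_lt_of_le j.isLt (F.posClause_length_le i)⟩), j.isLt⟩)

/-- The list of all occurrences of the variable `x`, in a fixed order. -/
def occsOfVar (x : F.Var) : List F.Occ :=
  ((List.finRange (F.m + F.n)).map (fun i => F.occList i)).flatten.filter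
    (fun o => decide (F.litOf o = x))

end Formula

end PopMatch

namespace PopMatch

/-- The clauses of the transformed formula: positive ones (`.inl`) and the
negative clauses `D = ¬X_k ∨ ¬X_{n+k}` (`.inr k`). -/
abbrev CIdx (F : Formula) := Fin (F.m + F.n) ⊕ Fin F.n

/-- The number of literals of a clause. -/
def clen (F : Formula) : CIdx F → ℕ
  | Sum.inl i => (F.posClause i).length
  | Sum.inr _ => 2

/-- Index of a `u`/`v` vertex of `Ĝ_φ`: a clause `ℓ` with `r` literals
together with a position `0 ≤ j ≤ r`. -/
abbrev UVIdx (F : Formula) := Σ ℓ : CIdx F, Fin (clen F ℓ + 1)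

/-- The list of all clauses. -/
def allC (F : Formula) : List (CIdx F) :=
  ((List.finRange (F.m + F.n)).map Sum.inl) ++ ((List.finRange F.n).map Sum.inr)

/-- The occurrence given by position `jj` (0-based) of the positive
clause `i`. -/
def mkOcc (F : Formula) (i : Fin (F.m + F.n)) (jj : ℕ)
    (h : jj < (F.posClause i).length) : F.Occ :=
  ⟨(i, ⟨jj, lt_of_lt_of_le h (F.posClause_length_le i)⟩), h⟩

/-- The vertices of the marriage instance `Ĝ_φ`. -/
inductive HGV (F : Formula) where
  | s : HGV F
  | t : HGV F
  | u : UVIdx F → HGV F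
  | vv : UVIdx F → HGV F
  | pa : F.Occ → HGV F
  | pb : F.Occ → HGV F
  | pa' : F.Occ → HGV F
  | pb' : F.Occ → HGV F
  | nc : F.Var → HGV F
  | nd : F.Var → HGV F
  | nc' : F.Var → HGV F
  | nd' : F.Var → HGV F
  deriving DecidableEq, Fintype

namespace HGV

/-- The preference lists of `Ĝ_φ`. -/
def plist (F : Formula) : HGV F → List (HGV F)
  | .s => (allC F).map (fun ℓ => .u ⟨ℓ, ⟨0, Nat.succ_pos _⟩⟩)
  | .t => (allC F).map (fun ℓ => .vv ⟨ℓ, ⟨clen F ℓ, Nat.lt_succ_self _⟩⟩)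
  | .u ⟨Sum.inl i, j⟩ =>
      if h0 : j.val = 0 then [.vv ⟨Sum.inl i, j⟩, .s]
      else
        [.pb (mkOcc F i (j.val - 1)
            (by have hj := j.isLt; simp only [clen] at hj; omega)),
         .vv ⟨Sum.inl i, j⟩]
  | .u ⟨Sum.inr k, j⟩ =>
      if j.val = 0 then [.vv ⟨Sum.inr k, j⟩, .s]
      else [.vv ⟨Sum.inr k, j⟩,
            .nd (if j.val = 1 then F.varFst k else F.varSnd k)]
  | .vv ⟨Sum.inl i, j⟩ =>
      if h0 : j.val = (F.posClause i).length then [.u ⟨Sum.inl i, j⟩, .t]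
      else
        [.u ⟨Sum.inl i, j⟩,
         .pa (mkOcc F i j.val
            (by have hj := j.isLt; simp only [clen] at hj; omega))]
  | .vv ⟨Sum.inr k, j⟩ =>
      if j.val = 2 then [.u ⟨Sum.inr k, j⟩, .t]
      else [.nc (if j.val = 0 then F.varFst k else F.varSnd k),
            .u ⟨Sum.inr k, j⟩]
  | .pa o =>
      [.pb o,
       .vv ⟨Sum.inl o.1.1, ⟨o.1.2.val, by
          have := o.2; simp only [clen]; omega⟩⟩,
       .pb' o]
  | .pa' o => [.pb' o, .pb o]
  | .pb o =>
      [.pa' o, .nc (F.litOf o), .pa o,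
       .u ⟨Sum.inl o.1.1, ⟨o.1.2.val + 1, by
          have := o.2; simp only [clen]; omega⟩⟩]
  | .pb' o => [.pa o, .pa' o]
  | .nc x =>
      .nd x :: (F.occsOfVar x).map HGV.pb ++
        [.nd' x,
         .vv ⟨Sum.inr (F.negIdx x), ⟨if x.val < F.n then 0 else 1, by
            have : clen F (Sum.inr (F.negIdx x)) = 2 := rfl
            rw [this]; split <;> omega⟩⟩]
  | .nc' x => [.nd' x, .nd x]
  | .nd x =>
      [.nc' x,
       .u ⟨Sum.inr (F.negIdx x), ⟨if x.val < F.n then 1 else 2, by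
          have : clen F (Sum.inr (F.negIdx x)) = 2 := rfl
          rw [this]; split <;> omega⟩⟩,
       .nc x]
  | .nd' x => [.nc x, .nc' x]

/-- The bipartition side of a vertex of `Ĝ_φ`. -/
def side {F : Formula} : HGV F → Bool
  | .t => true
  | .u _ => true
  | .pa _ => true
  | .pa' _ => true
  | .nc _ => true
  | .nc' _ => true
  | _ => false

end HGV

/-- The marriage instance `Ĝ_φ` associated with the transformed 3SAT
formula `φ`. -/
def Ghat (F : Formula) : Inst (HGV F) :=
  ⟨Finset.univ.filter (fun w => HGV.side w = true),
   Finset.univ.filter (fun w => HGV.side w = false),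
   HGV.plist F⟩

variable {F : Formula}

/-- The gadget of the occurrence `o` is in **true state** in the matching `p`
of `Ĝ_φ` (it contains the edges `(a_j, b_j)` and `(a'_j, b'_j)`). -/
def PosTrueH (p : HGV F → Option (HGV F)) (o : F.Occ) : Prop :=
  p (HGV.pa o) = some (HGV.pb o) ∧ p (HGV.pa' o) = some (HGV.pb' o)

/-- The gadget of the occurrence `o` is in **false state** in the matching `p`
of `Ĝ_φ` (it contains the edges `(a_j, b'_j)` and `(a'_j, b_j)`). -/
def PosFalseH (p : HGV F → Option (HGV F)) (o : F.Occ) : Prop :=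
  p (HGV.pa o) = some (HGV.pb' o) ∧ p (HGV.pa' o) = some (HGV.pb o)

/-- The gadget of `¬x` is in **true state** in the matching `p` of `Ĝ_φ`
(it contains the edges `(c_k, d'_k)` and `(c'_k, d_k)`). -/
def NegTrueH (p : HGV F → Option (HGV F)) (x : F.Var) : Prop :=
  p (HGV.nc x) = some (HGV.nd' x) ∧ p (HGV.nc' x) = some (HGV.nd x)

/-- The gadget of `¬x` is in **false state** in the matching `p` of `Ĝ_φ`
(it contains the edges `(c_k, d_k)` and `(c'_k, d'_k)`). -/
def NegFalseH (p : HGV F → Option (HGV F)) (x : F.Var) : Prop :=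
  p (HGV.nc x) = some (HGV.nd x) ∧ p (HGV.nc' x) = some (HGV.nd' x)

end PopMatch

namespace PopMatch

section Infra
variable {F : Formula}
open HGV


/-- split-based preference lemma -/
theorem pref_split {u w v : HGV F} {l1 l2 : List (HGV F)}
    (h : HGV.plist F u = l1 ++ l2) (hw : w ∈ l1) (hv1 : v ∉ l1) (hv2 : v ∈ l2) :
    (Ghat F).pref u w v := by
  have hplist : (Ghat F).plist u = l1 ++ l2 := h
  refine ⟨?_, ?_, ?_⟩
  · rw [hplist]; exact List.mem_append_left _ hw
  · rw [hplist]; exact List.mem_append_right _ hv2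
  · rw [hplist, List.idxOf_append_of_mem hw, List.idxOf_append_of_notMem hv1]
    calc List.idxOf w l1 < l1.length := List.idxOf_lt_length_iff.2 hw
    _ ≤ l1.length + List.idxOf v l2 := Nat.le_add_right _ _

theorem not_pref_split {u w v : HGV F} {l1 l2 : List (HGV F)}
    (h : HGV.plist F u = l1 ++ l2) (hw : w ∈ l1) (hv1 : v ∉ l1) :
    ¬ (Ghat F).pref u v w := by
  rintro ⟨-, -, hlt⟩
  have hplist : (Ghat F).plist u = l1 ++ l2 := h
  rw [hplist, List.idxOf_append_of_mem hw, List.idxOf_append_of_notMem hv1] at hlt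
  have h1 : List.idxOf w l1 < l1.length := List.idxOf_lt_length_iff.2 hw
  omega

end Infra
section PL
variable {F : Formula}
open HGV

/-- v^ℓ_{j-1} neighbor of the gadget of occurrence o (position j-1 = o.1.2.val). -/
def vprev (o : F.Occ) : HGV F :=
  .vv ⟨Sum.inl o.1.1, ⟨o.1.2.val, by have := o.2; simp only [clen]; omega⟩⟩

def unext (o : F.Occ) : HGV F :=
  .u ⟨Sum.inl o.1.1, ⟨o.1.2.val + 1, by have := o.2; simp only [clen]; omega⟩⟩

def vprevN (x : F.Var) : HGV F :=
  .vv ⟨Sum.inr (F.negIdx x), ⟨if x.val < F.n then 0 else 1, by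
    have : clen F (Sum.inr (F.negIdx x)) = 2 := rfl
    rw [this]; split <;> omega⟩⟩

def unextN (x : F.Var) : HGV F :=
  .u ⟨Sum.inr (F.negIdx x), ⟨if x.val < F.n then 1 else 2, by
    have : clen F (Sum.inr (F.negIdx x)) = 2 := rfl
    rw [this]; split <;> omega⟩⟩

theorem plist_pa (o : F.Occ) :
    HGV.plist F (.pa o) = [.pb o, vprev o, .pb' o] := rfl

theorem plist_pa' (o : F.Occ) :
    HGV.plist F (.pa' o) = [.pb' o, .pb o] := rfl

theorem plist_pb (o : F.Occ) :
    HGV.plist F (.pb o) = [.pa' o, .nc (F.litOf o), .pa o, unext o] := rfl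

theorem plist_pb' (o : F.Occ) :
    HGV.plist F (.pb' o) = [.pa o, .pa' o] := rfl

theorem plist_nc (x : F.Var) :
    HGV.plist F (.nc x) = .nd x :: (F.occsOfVar x).map HGV.pb ++ [.nd' x, vprevN x] := rfl

theorem plist_nc' (x : F.Var) :
    HGV.plist F (.nc' x) = [.nd' x, .nd x] := rfl

theorem plist_nd (x : F.Var) :
    HGV.plist F (.nd x) = [.nc' x, unextN x, .nc x] := rfl

theorem plist_nd' (x : F.Var) :
    HGV.plist F (.nd' x) = [.nc x, .nc' x] := rfl

theorem plist_s :
    HGV.plist F .s = (allC F).map (fun ℓ => .u ⟨ℓ, ⟨0, Nat.succ_pos _⟩⟩) := rfl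

theorem plist_t :
    HGV.plist F .t = (allC F).map (fun ℓ => .vv ⟨ℓ, ⟨clen F ℓ, Nat.lt_succ_self _⟩⟩) := rfl

theorem plist_u_inl0 {i : Fin (F.m + F.n)} {j : Fin (clen F (Sum.inl i) + 1)} (h : j.val = 0) :
    HGV.plist F (.u ⟨Sum.inl i, j⟩) = [.vv ⟨Sum.inl i, j⟩, .s] := by
  simp only [HGV.plist, dif_pos h]

theorem plist_u_inl {i : Fin (F.m + F.n)} {j : Fin (clen F (Sum.inl i) + 1)} (h : j.val ≠ 0) :
    HGV.plist F (.u ⟨Sum.inl i, j⟩) =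
      [.pb (mkOcc F i (j.val - 1) (by have hj := j.isLt; simp only [clen] at hj; omega)),
       .vv ⟨Sum.inl i, j⟩] := by
  simp only [HGV.plist, dif_neg h]

theorem plist_u_inr0 {k : Fin F.n} {j : Fin (clen F (Sum.inr k) + 1)} (h : j.val = 0) :
    HGV.plist F (.u ⟨Sum.inr k, j⟩) = [.vv ⟨Sum.inr k, j⟩, .s] := by
  simp only [HGV.plist, if_pos h]

theorem plist_u_inr {k : Fin F.n} {j : Fin (clen F (Sum.inr k) + 1)} (h : j.val ≠ 0) :
    HGV.plist F (.u ⟨Sum.inr k, j⟩) =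
      [.vv ⟨Sum.inr k, j⟩, .nd (if j.val = 1 then F.varFst k else F.varSnd k)] := by
  simp only [HGV.plist, if_neg h]

theorem plist_vv_inl_top {i : Fin (F.m + F.n)} {j : Fin (clen F (Sum.inl i) + 1)}
    (h : j.val = (F.posClause i).length) :
    HGV.plist F (.vv ⟨Sum.inl i, j⟩) = [.u ⟨Sum.inl i, j⟩, .t] := by
  simp only [HGV.plist, dif_pos h]

theorem plist_vv_inl {i : Fin (F.m + F.n)} {j : Fin (clen F (Sum.inl i) + 1)}
    (h : j.val ≠ (F.posClause i).length) :
    HGV.plist F (.vv ⟨Sum.inl i, j⟩) =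
      [.u ⟨Sum.inl i, j⟩,
       .pa (mkOcc F i j.val (by have hj := j.isLt; simp only [clen] at hj; omega))] := by
  simp only [HGV.plist, dif_neg h]

theorem plist_vv_inr_top {k : Fin F.n} {j : Fin (clen F (Sum.inr k) + 1)} (h : j.val = 2) :
    HGV.plist F (.vv ⟨Sum.inr k, j⟩) = [.u ⟨Sum.inr k, j⟩, .t] := by
  simp only [HGV.plist, if_pos h]

theorem plist_vv_inr {k : Fin F.n} {j : Fin (clen F (Sum.inr k) + 1)} (h : j.val ≠ 2) :
    HGV.plist F (.vv ⟨Sum.inr k, j⟩) =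
      [.nc (if j.val = 0 then F.varFst k else F.varSnd k), .u ⟨Sum.inr k, j⟩] := by
  simp only [HGV.plist, if_neg h]

theorem mkOcc_fst (i jj h) : (mkOcc F i jj h).1.1 = i := rfl
theorem mkOcc_snd (i jj h) : (mkOcc F i jj h).1.2.val = jj := rfl

theorem mkOcc_eq (o : F.Occ) (h : o.1.2.val < (F.posClause o.1.1).length) :
    mkOcc F o.1.1 o.1.2.val h = o := by
  rcases o with ⟨⟨i, j⟩, hj⟩
  simp only [mkOcc, Subtype.mk.injEq, Prod.mk.injEq]
  rfl

theorem litOf_of_mem_occsOfVar {x : F.Var} {o : F.Occ} (h : o ∈ F.occsOfVar x) :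
    F.litOf o = x := by
  have := (List.mem_filter.1 h).2
  simpa using this

theorem mem_occsOfVar (o : F.Occ) : o ∈ F.occsOfVar (F.litOf o) := by
  refine List.mem_filter.2 ⟨?_, by simp⟩
  refine List.mem_flatten.2 ⟨F.occList o.1.1, List.mem_map.2 ⟨o.1.1, List.mem_finRange _, rfl⟩, ?_⟩
  refine List.mem_map.2 ⟨⟨o.1.2.val, o.2⟩, List.mem_finRange _, ?_⟩
  rcases o with ⟨⟨i, j⟩, hj⟩
  simp only [Subtype.mk.injEq, Prod.mk.injEq]
  rfl

end PL
section MH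
variable {F : Formula} {p : HGV F → Option (HGV F)}
open HGV

theorem msym (hm : (Ghat F).IsMatching p) {u v : HGV F} (h : p u = some v) :
    p v = some u := hm.1 u v h

theorem mmem (hm : (Ghat F).IsMatching p) {u v : HGV F} (h : p u = some v) :
    v ∈ HGV.plist F u := (hm.2 u v h).1

theorem prefOver_none {u v : HGV F} (h : p u = none) : (Ghat F).PrefOver p u v := by
  simp [Inst.PrefOver, h]

theorem prefOver_some {u v w : HGV F} (h : p u = some w) (hp : (Ghat F).pref u v w) :
    (Ghat F).PrefOver p u v := by
  simp only [Inst.PrefOver, h]; exact hp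

theorem not_prefOver {u v w : HGV F} (h : p u = some w) (hp : ¬ (Ghat F).pref u v w) :
    ¬ (Ghat F).PrefOver p u v := by
  simp only [Inst.PrefOver, h]; exact hp

theorem mk_adj {u v : HGV F} (h1 : v ∈ HGV.plist F u) (h2 : u ∈ HGV.plist F v) :
    (Ghat F).adj u v := ⟨h1, h2⟩

theorem no_block (hs : (Ghat F).Stable p) {u v : HGV F}
    (h1 : v ∈ HGV.plist F u) (h2 : u ∈ HGV.plist F v) (hne : p u ≠ some v)
    (h3 : (Ghat F).PrefOver p u v) (h4 : (Ghat F).PrefOver p v u) : False :=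
  hs.2 u v ⟨⟨h1, h2⟩, hne, h3, h4⟩

end MH
section FWD
variable {F : Formula} {p : HGV F → Option (HGV F)}
open HGV

/-- Lemma B: in a stable matching, `b_j` is never matched to `u^ℓ_j`. -/
theorem lemB (hs : (Ghat F).Stable p) (o : F.Occ) : p (.pb o) ≠ some (unext o) := by
  intro h
  have hm := hs.1
  refine no_block hs (u := .pa o) (v := .pb o) ?_ ?_ ?_ ?_ ?_
  · rw [plist_pa]; simp
  · rw [plist_pb]; simp
  · intro hpa
    have := msym hm hpa
    rw [h] at this; simp [unext] at this
  · rcases hpa : p (.pa o) with _ | w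
    · exact prefOver_none hpa
    · have hw := mmem hm hpa
      rw [plist_pa] at hw; simp at hw
      rcases hw with hw | hw | hw
      · subst hw
        have := msym hm hpa; rw [h] at this; simp [unext] at this
      · subst hw
        exact prefOver_some hpa (pref_split (l1 := [.pb o]) (l2 := [vprev o, .pb' o])
          (plist_pa o) (by simp) (by simp [vprev]) (by simp))
      · subst hw
        exact prefOver_some hpa (pref_split (l1 := [.pb o]) (l2 := [vprev o, .pb' o])
          (plist_pa o) (by simp) (by simp) (by simp))
  · exact prefOver_some h (pref_split (l1 := [.pa' o, .nc (F.litOf o), .pa o])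
      (l2 := [unext o]) (plist_pb o) (by simp) (by simp [unext]) (by simp))

end FWD
section FWD2
variable {F : Formula} {p : HGV F → Option (HGV F)}
open HGV

theorem unext_mkOcc {i : Fin (F.m + F.n)} {j : Fin (clen F (Sum.inl i) + 1)}
    (h : j.val ≠ 0) (hlt : j.val - 1 < (F.posClause i).length) :
    unext (mkOcc F i (j.val - 1) hlt) = HGV.u ⟨Sum.inl i, j⟩ := by
  simp only [unext, mkOcc]
  exact congrArg (fun jj => HGV.u ⟨Sum.inl i, jj⟩) (Fin.ext (by simp; omega))

/-- Lemma U (positive clauses): `u^ℓ_j` is matched to `v^ℓ_j`. -/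
theorem lemU_inl (hs : (Ghat F).Stable p) (i : Fin (F.m + F.n))
    (j : Fin (clen F (Sum.inl i) + 1)) :
    p (.u ⟨Sum.inl i, j⟩) = some (.vv ⟨Sum.inl i, j⟩) := by
  have hm := hs.1
  by_contra h
  refine no_block hs (u := .u ⟨Sum.inl i, j⟩) (v := .vv ⟨Sum.inl i, j⟩) ?_ ?_ h ?_ ?_
  · by_cases h0 : j.val = 0
    · rw [plist_u_inl0 h0]; simp
    · rw [plist_u_inl h0]; simp
  · by_cases ht : j.val = (F.posClause i).length
    · rw [plist_vv_inl_top ht]; simp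
    · rw [plist_vv_inl ht]; simp
  · rcases hpu : p (.u ⟨Sum.inl i, j⟩) with _ | w
    · exact prefOver_none hpu
    · have hw := mmem hm hpu
      by_cases h0 : j.val = 0
      · rw [plist_u_inl0 h0] at hw; simp at hw
        rcases hw with hw | hw
        · rw [hw] at hpu; exact absurd hpu h
        · subst hw
          exact prefOver_some hpu (pref_split (l1 := [.vv ⟨Sum.inl i, j⟩]) (l2 := [.s])
            (plist_u_inl0 h0) (by simp) (by simp) (by simp))
      · rw [plist_u_inl h0] at hw; simp at hw
        rcases hw with hw | hw
        · subst hw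
          have := msym hm hpu
          exact absurd (show p (HGV.pb (mkOcc F i (j.val - 1) (by have hj := j.isLt; simp only [clen] at hj; omega))) = some (unext _) by rw [unext_mkOcc h0]; exact this) (lemB hs _)
        · rw [hw] at hpu; exact absurd hpu h
  · rcases hpv : p (.vv ⟨Sum.inl i, j⟩) with _ | w
    · exact prefOver_none hpv
    · have hw := mmem hm hpv
      by_cases ht : j.val = (F.posClause i).length
      · rw [plist_vv_inl_top ht] at hw; simp at hw
        rcases hw with hw | hw
        · subst hw
          exact absurd (msym hm hpv) h
        · subst hw
          exact prefOver_some hpv (pref_split (l1 := [.u ⟨Sum.inl i, j⟩]) (l2 := [.t])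
            (plist_vv_inl_top ht) (by simp) (by simp) (by simp))
      · rw [plist_vv_inl ht] at hw; simp at hw
        rcases hw with hw | hw
        · subst hw
          exact absurd (msym hm hpv) h
        · subst hw
          exact prefOver_some hpv (pref_split (l1 := [.u ⟨Sum.inl i, j⟩])
            (l2 := [.pa (mkOcc F i j.val (by have hj := j.isLt; simp only [clen] at hj; omega))])
            (plist_vv_inl ht) (by simp) (by simp) (by simp))

end FWD2
section FWD3
variable {F : Formula} {p : HGV F → Option (HGV F)}
open HGV

theorem plist_nc_split (x : F.Var) :
    HGV.plist F (.nc x) =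
      (HGV.nd x :: (F.occsOfVar x).map HGV.pb ++ [.nd' x]) ++ [vprevN x] := by
  rw [plist_nc]; simp

theorem negIdx_varFst (k : Fin F.n) : F.negIdx (F.varFst k) = k := by
  have hk := k.isLt
  simp only [Formula.negIdx, Formula.varFst]
  exact dif_pos hk

theorem negIdx_varSnd (k : Fin F.n) : F.negIdx (F.varSnd k) = k := by
  simp only [Formula.negIdx, Formula.varSnd]
  exact (dif_neg (by omega)).trans (Fin.ext (by simp))

theorem u_congr {c c' : Fin F.n} (h : c = c')
    {j : Fin (clen F (Sum.inr c) + 1)} {j' : Fin (clen F (Sum.inr c') + 1)}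
    (hv : j.val = j'.val) :
    (HGV.u ⟨Sum.inr c, j⟩ : HGV F) = .u ⟨Sum.inr c', j'⟩ := by
  subst h; exact congrArg (fun jj => HGV.u ⟨Sum.inr c, jj⟩) (Fin.ext hv)

theorem vv_congr {c c' : Fin F.n} (h : c = c')
    {j : Fin (clen F (Sum.inr c) + 1)} {j' : Fin (clen F (Sum.inr c') + 1)}
    (hv : j.val = j'.val) :
    (HGV.vv ⟨Sum.inr c, j⟩ : HGV F) = .vv ⟨Sum.inr c', j'⟩ := by
  subst h; exact congrArg (fun jj => HGV.vv ⟨Sum.inr c, jj⟩) (Fin.ext hv)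

theorem unextN_eq (k : Fin F.n) (j : Fin (clen F (Sum.inr k) + 1)) (h1 : j.val = 1 ∨ j.val = 2) :
    unextN (if j.val = 1 then F.varFst k else F.varSnd k) = .u ⟨Sum.inr k, j⟩ := by
  rcases h1 with h1 | h1
  · rw [if_pos h1]
    exact u_congr (negIdx_varFst k) (by simp [Formula.varFst]; omega)
  · rw [if_neg (by omega)]
    exact u_congr (negIdx_varSnd k) (by simp [Formula.varSnd]; omega)

theorem vprevN_eq (k : Fin F.n) (j : Fin (clen F (Sum.inr k) + 1)) (h1 : j.val = 0 ∨ j.val = 1) :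
    vprevN (if j.val = 0 then F.varFst k else F.varSnd k) = .vv ⟨Sum.inr k, j⟩ := by
  rcases h1 with h1 | h1
  · rw [if_pos h1]
    exact vv_congr (negIdx_varFst k) (by simp [Formula.varFst]; omega)
  · rw [if_neg (by omega)]
    exact vv_congr (negIdx_varSnd k) (by simp [Formula.varSnd]; omega)

/-- Lemma CE: no consistency edge in a stable matching. -/
theorem lemCE (hs : (Ghat F).Stable p) (o : F.Occ) (x : F.Var) :
    p (.pb o) ≠ some (.nc x) := by
  intro h
  have hm := hs.1
  have hx : x = F.litOf o := by
    have := mmem hm h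
    rw [plist_pb] at this; simp [unext] at this; exact this
  subst hx
  have hvv : p (vprev o) = some (.u ⟨Sum.inl o.1.1, ⟨o.1.2.val, by
      have := o.2; simp only [clen]; omega⟩⟩) :=
    msym hm (lemU_inl hs o.1.1 _)
  rcases hpa : p (.pa o) with _ | w
  · -- p (pa o) = none : block on (pa o, pb' o)
    refine no_block hs (u := .pa o) (v := .pb' o) ?_ ?_ ?_ ?_ ?_
    · rw [plist_pa]; simp
    · rw [plist_pb']; simp
    · rw [hpa]; simp
    · exact prefOver_none hpa
    · rcases hpb' : p (.pb' o) with _ | w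
      · exact prefOver_none hpb'
      · have hw := mmem hm hpb'
        rw [plist_pb'] at hw; simp at hw
        rcases hw with hw | hw
        · subst hw; rw [msym hm hpb'] at hpa; simp at hpa
        · subst hw
          exact prefOver_some hpb' (pref_split (l1 := [.pa o]) (l2 := [.pa' o])
            (plist_pb' o) (by simp) (by simp) (by simp))
  · have hw := mmem hm hpa
    rw [plist_pa] at hw; simp at hw
    rcases hw with hw | hw | hw
    · subst hw; rw [msym hm hpa] at h; simp at h
    · subst hw; rw [msym hm hpa] at hvv; simp at hvv
    · subst hw
      -- p (pa o) = pb' o : pa' is unmatched, block on (pa' o, pb o)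
      have hpb'2 : p (.pb' o) = some (.pa o) := msym hm hpa
      have hpa' : p (.pa' o) = none := by
        rcases hpa' : p (.pa' o) with _ | w
        · rfl
        · have hw := mmem hm hpa'
          rw [plist_pa'] at hw; simp at hw
          rcases hw with hw | hw
          · subst hw
            have hcon := msym hm hpa'; rw [hpb'2] at hcon; simp at hcon
          · subst hw; rw [msym hm hpa'] at h; simp at h
      refine no_block hs (u := .pa' o) (v := .pb o) ?_ ?_ ?_ ?_ ?_
      · rw [plist_pa']; simp
      · rw [plist_pb]; simp
      · rw [hpa']; simp
      · exact prefOver_none hpa'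
      · exact prefOver_some h (pref_split (l1 := [.pa' o])
          (l2 := [.nc (F.litOf o), .pa o, unext o]) (plist_pb o) (by simp) (by simp) (by simp))

/-- Lemma C: in a stable matching, `c_k` is never matched to `v`. -/
theorem lemC (hs : (Ghat F).Stable p) (x : F.Var) :
    p (.nc x) ≠ some (vprevN x) := by
  intro h
  have hm := hs.1
  refine no_block hs (u := .nc x) (v := .nd' x) ?_ ?_ ?_ ?_ ?_
  · rw [plist_nc]; simp
  · rw [plist_nd']; simp
  · rw [h]; simp [vprevN]
  · exact prefOver_some h (pref_split (l1 := HGV.nd x :: (F.occsOfVar x).map HGV.pb ++ [.nd' x])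
      (l2 := [vprevN x]) (plist_nc_split x) (by simp) (by simp [vprevN]) (by simp))
  · rcases hnd' : p (.nd' x) with _ | w
    · exact prefOver_none hnd'
    · have hw := mmem hm hnd'
      rw [plist_nd'] at hw; simp at hw
      rcases hw with hw | hw
      · subst hw; rw [msym hm hnd'] at h; simp [vprevN] at h
      · subst hw
        exact prefOver_some hnd' (pref_split (l1 := [.nc x]) (l2 := [.nc' x])
          (plist_nd' x) (by simp) (by simp) (by simp))

end FWD3
section FWD4
variable {F : Formula} {p : HGV F → Option (HGV F)}
open HGV

/-- Helper: the possible partners of `c_k`. -/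
theorem nc_cases (hm : (Ghat F).IsMatching p) {x : F.Var} {w : HGV F}
    (h : p (.nc x) = some w) :
    w = .nd x ∨ (∃ o ∈ F.occsOfVar x, w = .pb o) ∨ w = .nd' x ∨ w = vprevN x := by
  have hw := mmem hm h
  rw [plist_nc] at hw
  rcases List.mem_cons.1 hw with hw | hw
  · exact Or.inl hw
  rcases List.mem_append.1 hw with hw | hw
  · obtain ⟨o, ho, rfl⟩ := List.mem_map.1 hw
    exact Or.inr (Or.inl ⟨o, ho, rfl⟩)
  · simp only [List.mem_cons, List.mem_singleton, List.not_mem_nil, or_false] at hw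
    rcases hw with hw | hw
    · exact Or.inr (Or.inr (Or.inl hw))
    · exact Or.inr (Or.inr (Or.inr hw))

/-- Lemma: in a stable matching, `d_k` is never matched to `u`. -/
theorem lemNdU (hs : (Ghat F).Stable p) (x : F.Var) :
    p (.nd x) ≠ some (unextN x) := by
  intro h
  have hm := hs.1
  -- rule out p (nc x) being nd (taken), pb (lemCE), vprevN (lemC)
  have hnc : p (.nc x) = some (.nd' x) ∨ p (.nc x) = none := by
    rcases hnc : p (.nc x) with _ | w
    · exact Or.inr rfl
    · rcases nc_cases hm hnc with hw | ⟨o, ho, rfl⟩ | hw | hw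
      · subst hw; rw [msym hm hnc] at h; simp [unextN] at h
      · exact absurd (msym hm hnc) (lemCE hs o x)
      · subst hw; exact Or.inl rfl
      · subst hw; exact absurd hnc (lemC hs x)
  rcases hnc' : p (.nc' x) with _ | w
  · -- nc' unmatched
    rcases hnc with hnc | hnc
    · -- p (nc x) = nd' x : block (nc' x, nd x)
      refine no_block hs (u := .nc' x) (v := .nd x) ?_ ?_ ?_ ?_ ?_
      · rw [plist_nc']; simp
      · rw [plist_nd]; simp
      · rw [hnc']; simp
      · exact prefOver_none hnc'
      · exact prefOver_some h (pref_split (l1 := [.nc' x]) (l2 := [unextN x, .nc x])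
          (plist_nd x) (by simp) (by simp [unextN]) (by simp))
    · -- p (nc x) = none : block (nc x, nd' x)
      refine no_block hs (u := .nc x) (v := .nd' x) ?_ ?_ ?_ ?_ ?_
      · rw [plist_nc]; simp
      · rw [plist_nd']; simp
      · rw [hnc]; simp
      · exact prefOver_none hnc
      · rcases hnd' : p (.nd' x) with _ | w
        · exact prefOver_none hnd'
        · have hw := mmem hm hnd'
          rw [plist_nd'] at hw; simp at hw
          rcases hw with hw | hw
          · subst hw; rw [msym hm hnd'] at hnc; simp at hnc
          · subst hw; rw [msym hm hnd'] at hnc'; simp at hnc'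
  · have hw := mmem hm hnc'
    rw [plist_nc'] at hw; simp at hw
    rcases hw with hw | hw
    · -- p (nc' x) = nd' x
      subst hw
      rcases hnc with hnc | hnc
      · have h1 := msym hm hnc
        have h2 := msym hm hnc'
        rw [h1] at h2; simp at h2
      · -- p (nc x) = none : block (nc x, nd' x)
        refine no_block hs (u := .nc x) (v := .nd' x) ?_ ?_ ?_ ?_ ?_
        · rw [plist_nc]; simp
        · rw [plist_nd']; simp
        · rw [hnc]; simp
        · exact prefOver_none hnc
        · exact prefOver_some (msym hm hnc') (pref_split (l1 := [.nc x]) (l2 := [.nc' x])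
            (plist_nd' x) (by simp) (by simp) (by simp))
    · -- p (nc' x) = nd x : but p (nd x) = unextN x
      subst hw
      rw [msym hm hnc'] at h; simp [unextN] at h

/-- Lemma U (negative clauses). -/
theorem lemU_inr (hs : (Ghat F).Stable p) (k : Fin F.n)
    (j : Fin (clen F (Sum.inr k) + 1)) :
    p (.u ⟨Sum.inr k, j⟩) = some (.vv ⟨Sum.inr k, j⟩) := by
  have hm := hs.1
  have hj2 : j.val ≤ 2 := by have := j.isLt; simp only [clen] at this; omega
  by_contra h
  refine no_block hs (u := .u ⟨Sum.inr k, j⟩) (v := .vv ⟨Sum.inr k, j⟩) ?_ ?_ h ?_ ?_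
  · by_cases h0 : j.val = 0
    · rw [plist_u_inr0 h0]; simp
    · rw [plist_u_inr h0]; simp
  · by_cases ht : j.val = 2
    · rw [plist_vv_inr_top ht]; simp
    · rw [plist_vv_inr ht]; simp
  · rcases hpu : p (.u ⟨Sum.inr k, j⟩) with _ | w
    · exact prefOver_none hpu
    · have hw := mmem hm hpu
      by_cases h0 : j.val = 0
      · rw [plist_u_inr0 h0] at hw; simp at hw
        rcases hw with hw | hw
        · rw [hw] at hpu; exact absurd hpu h
        · subst hw
          exact prefOver_some hpu (pref_split (l1 := [.vv ⟨Sum.inr k, j⟩]) (l2 := [.s])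
            (plist_u_inr0 h0) (by simp) (by simp) (by simp))
      · rw [plist_u_inr h0] at hw; simp at hw
        rcases hw with hw | hw
        · rw [hw] at hpu; exact absurd hpu h
        · subst hw
          have hsym := msym hm hpu
          rw [← unextN_eq k j (by omega)] at hsym
          exact absurd hsym (lemNdU hs _)
  · rcases hpv : p (.vv ⟨Sum.inr k, j⟩) with _ | w
    · exact prefOver_none hpv
    · have hw := mmem hm hpv
      by_cases ht : j.val = 2
      · rw [plist_vv_inr_top ht] at hw; simp at hw
        rcases hw with hw | hw
        · subst hw; exact absurd (msym hm hpv) h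
        · subst hw
          exact prefOver_some hpv (pref_split (l1 := [.u ⟨Sum.inr k, j⟩]) (l2 := [.t])
            (plist_vv_inr_top ht) (by simp) (by simp) (by simp))
      · rw [plist_vv_inr ht] at hw; simp at hw
        rcases hw with hw | hw
        · subst hw
          have hsym := msym hm hpv
          rw [← vprevN_eq k j (by omega)] at hsym
          simp only [Fin.val_eq_zero_iff] at hsym
          exact absurd hsym (lemC hs _)
        · subst hw; exact absurd (msym hm hpv) h

/-- Lemma U: every `u^ℓ_j` is matched to `v^ℓ_j`. -/
theorem lemU (hs : (Ghat F).Stable p) (q : UVIdx F) :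
    p (.u q) = some (.vv q) := by
  rcases q with ⟨(i | k), j⟩
  · exact lemU_inl hs i j
  · exact lemU_inr hs k j

end FWD4
section FWD5
variable {F : Formula} {p : HGV F → Option (HGV F)}
open HGV

theorem lemS (hs : (Ghat F).Stable p) : p .s = none := by
  rcases hps : p (.s : HGV F) with _ | w
  · rfl
  · exfalso
    have hw := mmem hs.1 hps
    rw [plist_s] at hw
    obtain ⟨ℓ, -, rfl⟩ := List.mem_map.1 hw
    have := msym hs.1 hps
    rw [lemU hs _] at this
    simp at this

theorem lemT (hs : (Ghat F).Stable p) : p .t = none := by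
  rcases hpt : p (.t : HGV F) with _ | w
  · rfl
  · exfalso
    have hw := mmem hs.1 hpt
    rw [plist_t] at hw
    obtain ⟨ℓ, -, rfl⟩ := List.mem_map.1 hw
    have h1 := msym hs.1 hpt
    have h2 := msym hs.1 (lemU hs ⟨ℓ, ⟨clen F ℓ, Nat.lt_succ_self _⟩⟩)
    rw [h1] at h2
    simp at h2

/-- Lemma N: every negative gadget is in false or true state. -/
theorem lemN (hs : (Ghat F).Stable p) (x : F.Var) :
    NegFalseH p x ∨ NegTrueH p x := by
  have hm := hs.1
  rcases hnc : p (.nc x) with _ | w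
  · -- nc unmatched : block (nc x, nd' x)
    exfalso
    refine no_block hs (u := .nc x) (v := .nd' x) ?_ ?_ ?_ ?_ ?_
    · rw [plist_nc]; simp
    · rw [plist_nd']; simp
    · rw [hnc]; simp
    · exact prefOver_none hnc
    · rcases hnd' : p (.nd' x) with _ | w
      · exact prefOver_none hnd'
      · have hw := mmem hm hnd'
        rw [plist_nd'] at hw; simp at hw
        rcases hw with hw | hw
        · subst hw; rw [msym hm hnd'] at hnc; simp at hnc
        · subst hw
          exact prefOver_some hnd' (pref_split (l1 := [.nc x]) (l2 := [.nc' x])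
            (plist_nd' x) (by simp) (by simp) (by simp))
  · rcases nc_cases hm hnc with hw | ⟨o, ho, rfl⟩ | hw | hw
    · -- p (nc x) = nd x : show NegFalseH
      subst hw
      left
      refine ⟨hnc, ?_⟩
      rcases hnc' : p (.nc' x) with _ | w
      · -- block (nc' x, nd' x)
        exfalso
        refine no_block hs (u := .nc' x) (v := .nd' x) ?_ ?_ ?_ ?_ ?_
        · rw [plist_nc']; simp
        · rw [plist_nd']; simp
        · rw [hnc']; simp
        · exact prefOver_none hnc'
        · rcases hnd' : p (.nd' x) with _ | w
          · exact prefOver_none hnd'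
          · have hw := mmem hm hnd'
            rw [plist_nd'] at hw; simp at hw
            rcases hw with hw | hw
            · subst hw
              have h1 := msym hm hnd'
              rw [hnc] at h1; simp at h1
            · subst hw
              have h1 := msym hm hnd'
              rw [hnc'] at h1; simp at h1
      · have hw := mmem hm hnc'
        rw [plist_nc'] at hw; simp at hw
        rcases hw with hw | hw
        · subst hw; rfl
        · subst hw
          have h1 := msym hm hnc'
          have h2 := msym hm hnc
          rw [h2] at h1; simp at h1
    · exact absurd (msym hm hnc) (lemCE hs o x)
    · -- p (nc x) = nd' x : show NegTrueH
      subst hw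
      right
      refine ⟨hnc, ?_⟩
      rcases hnc' : p (.nc' x) with _ | w
      · -- block (nc' x, nd x)
        exfalso
        refine no_block hs (u := .nc' x) (v := .nd x) ?_ ?_ ?_ ?_ ?_
        · rw [plist_nc']; simp
        · rw [plist_nd]; simp
        · rw [hnc']; simp
        · exact prefOver_none hnc'
        · rcases hnd : p (.nd x) with _ | w
          · exact prefOver_none hnd
          · have hw := mmem hm hnd
            rw [plist_nd] at hw; simp at hw
            rcases hw with hw | hw | hw
            · subst hw
              have h1 := msym hm hnd
              rw [hnc'] at h1; simp at h1
            · subst hw; exact absurd hnd (lemNdU hs x)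
            · subst hw
              have h1 := msym hm hnd
              rw [hnc] at h1; simp at h1
      · have hw := mmem hm hnc'
        rw [plist_nc'] at hw; simp at hw
        rcases hw with hw | hw
        · subst hw
          have h1 := msym hm hnc'
          have h2 := msym hm hnc
          rw [h2] at h1; simp at h1
        · subst hw; rfl
    · subst hw; exact absurd hnc (lemC hs x)

/-- Lemma P: every positive gadget is in true or false state. -/
theorem lemP (hs : (Ghat F).Stable p) (o : F.Occ) :
    PosTrueH p o ∨ PosFalseH p o := by
  have hm := hs.1
  have hvv : p (vprev o) = some (.u ⟨Sum.inl o.1.1, ⟨o.1.2.val, by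
      have := o.2; simp only [clen]; omega⟩⟩) :=
    msym hm (lemU_inl hs o.1.1 _)
  rcases hpb : p (.pb o) with _ | w
  · -- pb unmatched : block (pa o, pb o)
    exfalso
    refine no_block hs (u := .pa o) (v := .pb o) ?_ ?_ ?_ ?_ ?_
    · rw [plist_pa]; simp
    · rw [plist_pb]; simp
    · intro h1; rw [msym hm h1] at hpb; simp at hpb
    · rcases hpa : p (.pa o) with _ | w
      · exact prefOver_none hpa
      · have hw := mmem hm hpa
        rw [plist_pa] at hw; simp at hw
        rcases hw with hw | hw | hw
        · subst hw; rw [msym hm hpa] at hpb; simp at hpb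
        · subst hw
          have h1 := msym hm hpa
          rw [hvv] at h1; simp at h1
        · subst hw
          exact prefOver_some hpa (pref_split (l1 := [.pb o]) (l2 := [vprev o, .pb' o])
            (plist_pa o) (by simp) (by simp) (by simp))
    · exact prefOver_none hpb
  · have hw := mmem hm hpb
    rw [plist_pb] at hw; simp at hw
    rcases hw with hw | hw | hw | hw
    · -- p (pb o) = pa' o : PosFalseH
      subst hw
      right
      refine ⟨?_, msym hm hpb⟩
      rcases hpa : p (.pa o) with _ | w
      · -- block (pa o, pb' o)
        exfalso
        refine no_block hs (u := .pa o) (v := .pb' o) ?_ ?_ ?_ ?_ ?_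
        · rw [plist_pa]; simp
        · rw [plist_pb']; simp
        · rw [hpa]; simp
        · exact prefOver_none hpa
        · rcases hpb' : p (.pb' o) with _ | w
          · exact prefOver_none hpb'
          · have hw := mmem hm hpb'
            rw [plist_pb'] at hw; simp at hw
            rcases hw with hw | hw
            · subst hw
              have h1 := msym hm hpb'
              rw [hpa] at h1; simp at h1
            · subst hw
              have h1 := msym hm hpb'
              rw [msym hm hpb] at h1; simp at h1
      · have hw := mmem hm hpa
        rw [plist_pa] at hw; simp at hw
        rcases hw with hw | hw | hw
        · subst hw
          have h1 := msym hm hpa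
          rw [hpb] at h1; simp at h1
        · subst hw
          have h1 := msym hm hpa
          rw [hvv] at h1; simp at h1
        · subst hw; rfl
    · -- p (pb o) = nc (litOf o) : impossible
      subst hw; exact absurd hpb (lemCE hs o _)
    · -- p (pb o) = pa o : PosTrueH
      subst hw
      left
      refine ⟨msym hm hpb, ?_⟩
      rcases hpa' : p (.pa' o) with _ | w
      · -- block (pa' o, pb' o)
        exfalso
        refine no_block hs (u := .pa' o) (v := .pb' o) ?_ ?_ ?_ ?_ ?_
        · rw [plist_pa']; simp
        · rw [plist_pb']; simp
        · rw [hpa']; simp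
        · exact prefOver_none hpa'
        · rcases hpb' : p (.pb' o) with _ | w
          · exact prefOver_none hpb'
          · have hw := mmem hm hpb'
            rw [plist_pb'] at hw; simp at hw
            rcases hw with hw | hw
            · subst hw
              have h1 := msym hm hpb'
              rw [msym hm hpb] at h1; simp at h1
            · subst hw
              have h1 := msym hm hpb'
              rw [hpa'] at h1; simp at h1
      · have hw := mmem hm hpa'
        rw [plist_pa'] at hw; simp at hw
        rcases hw with hw | hw
        · subst hw; rfl
        · subst hw
          have h1 := msym hm hpa'
          rw [hpb] at h1; simp at h1
    · -- p (pb o) = unext o : impossible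
      subst hw; exact absurd hpb (lemB hs o)

/-- Lemma 4: if the gadget of `¬x` is in true state, all gadgets of `x` are false. -/
theorem lem4 (hs : (Ghat F).Stable p) (x : F.Var) (hT : NegTrueH p x)
    (o : F.Occ) (ho : F.litOf o = x) : PosFalseH p o := by
  have hm := hs.1
  rcases lemP hs o with hP | hP
  · exfalso
    subst ho
    refine no_block hs (u := .pb o) (v := .nc (F.litOf o)) ?_ ?_ ?_ ?_ ?_
    · rw [plist_pb]; simp
    · rw [plist_nc]
      exact List.mem_cons_of_mem _
        (List.mem_append_left _ (List.mem_map.2 ⟨o, mem_occsOfVar o, rfl⟩))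
    · rw [msym hm hP.1]; simp
    · exact prefOver_some (msym hm hP.1)
        (pref_split (l1 := [.pa' o, .nc (F.litOf o)]) (l2 := [.pa o, unext o])
          (plist_pb o) (by simp) (by simp) (by simp))
    · refine prefOver_some hT.1
        (pref_split (l1 := HGV.nd (F.litOf o) :: (F.occsOfVar (F.litOf o)).map HGV.pb)
          (l2 := [.nd' (F.litOf o), vprevN (F.litOf o)])
          (by rw [plist_nc])
          (List.mem_cons_of_mem _ (List.mem_map.2 ⟨o, mem_occsOfVar o, rfl⟩)) ?_ (by simp))
      simp
  · exact hP

end FWD5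
section BWD
variable {F : Formula} {p : HGV F → Option (HGV F)}
open HGV

theorem not_pref_hd {u w v : HGV F} {l : List (HGV F)}
    (h : HGV.plist F u = w :: l) (hv : v ≠ w) : ¬ (Ghat F).pref u v w :=
  not_pref_split (l1 := [w]) (l2 := l) (by rw [h]; rfl) (by simp) (by simp [hv])

theorem not_pref3 {u v a b w : HGV F} {l : List (HGV F)}
    (h : HGV.plist F u = a :: b :: w :: l) (hva : v ≠ a) (hvb : v ≠ b) (hvw : v ≠ w) :
    ¬ (Ghat F).pref u v w :=
  not_pref_split (l1 := [a, b, w]) (l2 := l) (by rw [h]; rfl) (by simp)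
    (by simp [hva, hvb, hvw])

theorem bwd (hm : (Ghat F).IsMatching p)
    (hU : ∀ q : UVIdx F, p (HGV.u q) = some (HGV.vv q))
    (hN : ∀ x : F.Var, NegFalseH p x ∨ NegTrueH p x)
    (hP : ∀ o : F.Occ, PosTrueH p o ∨ PosFalseH p o)
    (h4 : ∀ x : F.Var, NegTrueH p x → ∀ o : F.Occ, F.litOf o = x → PosFalseH p o) :
    (Ghat F).Stable p := by
  refine ⟨hm, ?_⟩
  rintro u v ⟨⟨hvu, huv⟩, hne, hpo1, hpo2⟩
  replace hvu : v ∈ HGV.plist F u := hvu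
  cases u with
  | s =>
    rw [plist_s] at hvu
    obtain ⟨ℓ, -, rfl⟩ := List.mem_map.1 hvu
    rcases ℓ with i | k
    · exact not_prefOver (hU _) (not_pref_hd (plist_u_inl0 rfl) (by simp)) hpo2
    · exact not_prefOver (hU _) (not_pref_hd (plist_u_inr0 rfl) (by simp)) hpo2
  | t =>
    rw [plist_t] at hvu
    obtain ⟨ℓ, -, rfl⟩ := List.mem_map.1 hvu
    rcases ℓ with i | k
    · exact not_prefOver (msym hm (hU _)) (not_pref_hd (plist_vv_inl_top rfl) (by simp)) hpo2
    · exact not_prefOver (msym hm (hU _)) (not_pref_hd (plist_vv_inr_top rfl) (by simp)) hpo2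
  | u q =>
    obtain ⟨ℓ, j⟩ := q
    rcases ℓ with i | k
    · by_cases h0 : j.val = 0
      · rw [plist_u_inl0 h0] at hvu; simp at hvu
        rcases hvu with rfl | rfl
        · exact hne (hU _)
        · exact not_prefOver (hU _) (not_pref_hd (plist_u_inl0 h0) (by simp)) hpo1
      · rw [plist_u_inl h0] at hvu; simp at hvu
        rcases hvu with rfl | rfl
        · rcases hP (mkOcc F i (j.val - 1) (by have hj := j.isLt; simp only [clen] at hj; omega))
            with hT | hF
          · exact not_prefOver (msym hm hT.1) (not_pref3 (plist_pb _)
              (by simp) (by simp) (by simp)) hpo2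
          · exact not_prefOver (msym hm hF.2) (not_pref_hd (plist_pb _) (by simp)) hpo2
        · exact hne (hU _)
    · by_cases h0 : j.val = 0
      · rw [plist_u_inr0 h0] at hvu; simp at hvu
        rcases hvu with rfl | rfl
        · exact hne (hU _)
        · exact not_prefOver (hU _) (not_pref_hd (plist_u_inr0 h0) (by simp)) hpo1
      · rw [plist_u_inr h0] at hvu; simp at hvu
        rcases hvu with rfl | rfl
        · exact hne (hU _)
        · exact not_prefOver (hU _) (not_pref_hd (plist_u_inr h0) (by simp)) hpo1
  | vv q =>
    obtain ⟨ℓ, j⟩ := q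
    rcases ℓ with i | k
    · by_cases ht : j.val = (F.posClause i).length
      · rw [plist_vv_inl_top ht] at hvu; simp at hvu
        rcases hvu with rfl | rfl
        · exact hne (msym hm (hU _))
        · exact not_prefOver (msym hm (hU _)) (not_pref_hd (plist_vv_inl_top ht) (by simp)) hpo1
      · rw [plist_vv_inl ht] at hvu; simp at hvu
        rcases hvu with rfl | rfl
        · exact hne (msym hm (hU _))
        · exact not_prefOver (msym hm (hU _)) (not_pref_hd (plist_vv_inl ht) (by simp)) hpo1
    · by_cases ht : j.val = 2
      · rw [plist_vv_inr_top ht] at hvu; simp at hvu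
        rcases hvu with rfl | rfl
        · exact hne (msym hm (hU _))
        · exact not_prefOver (msym hm (hU _)) (not_pref_hd (plist_vv_inr_top ht) (by simp)) hpo1
      · rw [plist_vv_inr ht] at hvu; simp at hvu
        rcases hvu with rfl | rfl
        · rcases hN (if j = 0 then F.varFst k else F.varSnd k) with hNF | hNT
          · exact not_prefOver hNF.1 (not_pref_hd (plist_nc _) (by simp)) hpo2
          · exact not_prefOver hNT.1 (not_pref_split (plist_nc_split _)
              (by simp) (by simp [vprevN])) hpo2
        · exact hne (msym hm (hU _))
  | pa o =>
    rw [plist_pa] at hvu; simp at hvu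
    rcases hP o with hT | hF
    · rcases hvu with rfl | rfl | rfl
      · exact hne hT.1
      · exact not_prefOver hT.1 (not_pref_hd (plist_pa o) (by simp [vprev])) hpo1
      · exact not_prefOver hT.1 (not_pref_hd (plist_pa o) (by simp)) hpo1
    · rcases hvu with rfl | rfl | rfl
      · exact not_prefOver (msym hm hF.2) (not_pref_hd (plist_pb o) (by simp)) hpo2
      · have hq : p (vprev o) = some (.u ⟨Sum.inl o.1.1, ⟨o.1.2.val, by
            have := o.2; simp only [clen]; omega⟩⟩) := msym hm (hU _)
        have hpl : HGV.plist F (vprev o) =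
            .u ⟨Sum.inl o.1.1, ⟨o.1.2.val, by have := o.2; simp only [clen]; omega⟩⟩ ::
            [.pa (mkOcc F o.1.1 o.1.2.val o.2)] :=
          plist_vv_inl (by simpa using Nat.ne_of_lt o.2)
        exact not_prefOver hq (not_pref_hd hpl (by simp)) hpo2
      · exact hne hF.1
  | pa' o =>
    rw [plist_pa'] at hvu; simp at hvu
    rcases hP o with hT | hF
    · rcases hvu with rfl | rfl
      · exact hne hT.2
      · exact not_prefOver hT.2 (not_pref_hd (plist_pa' o) (by simp)) hpo1
    · rcases hvu with rfl | rfl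
      · exact not_prefOver (msym hm hF.1) (not_pref_hd (plist_pb' o) (by simp)) hpo2
      · exact hne hF.2
  | pb o =>
    rw [plist_pb] at hvu; simp at hvu
    rcases hP o with hT | hF
    · have hb : p (.pb o) = some (.pa o) := msym hm hT.1
      rcases hvu with rfl | rfl | rfl | rfl
      · exact not_prefOver hT.2 (not_pref_hd (plist_pa' o) (by simp)) hpo2
      · rcases hN (F.litOf o) with hNF | hNT
        · exact not_prefOver hNF.1 (not_pref_hd (plist_nc _) (by simp)) hpo2
        · exfalso
          have := (h4 _ hNT o rfl).1
          rw [hT.1] at this; simp at this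
      · exact hne hb
      · exact not_prefOver hb (not_pref3 (plist_pb o)
          (by simp [unext]) (by simp [unext]) (by simp [unext])) hpo1
    · have hb : p (.pb o) = some (.pa' o) := msym hm hF.2
      rcases hvu with rfl | rfl | rfl | rfl
      · exact hne hb
      · exact not_prefOver hb (not_pref_hd (plist_pb o) (by simp)) hpo1
      · exact not_prefOver hb (not_pref_hd (plist_pb o) (by simp)) hpo1
      · exact not_prefOver hb (not_pref_hd (plist_pb o) (by simp [unext])) hpo1
  | pb' o =>
    rw [plist_pb'] at hvu; simp at hvu
    rcases hP o with hT | hF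
    · rcases hvu with rfl | rfl
      · exact not_prefOver hT.1 (not_pref_hd (plist_pa o) (by simp)) hpo2
      · exact hne (msym hm hT.2)
    · rcases hvu with rfl | rfl
      · exact hne (msym hm hF.1)
      · exact not_prefOver (msym hm hF.1) (not_pref_hd (plist_pb' o) (by simp)) hpo1
  | nc x =>
    rw [plist_nc] at hvu
    have hvu' : v = .nd x ∨ (∃ o ∈ F.occsOfVar x, v = .pb o) ∨ v = .nd' x ∨ v = vprevN x := by
      rcases List.mem_cons.1 hvu with hw | hw
      · exact Or.inl hw
      rcases List.mem_append.1 hw with hw | hw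
      · obtain ⟨o, ho, rfl⟩ := List.mem_map.1 hw
        exact Or.inr (Or.inl ⟨o, ho, rfl⟩)
      · simp only [List.mem_cons, List.mem_singleton, List.not_mem_nil, or_false] at hw
        rcases hw with hw | hw
        · exact Or.inr (Or.inr (Or.inl hw))
        · exact Or.inr (Or.inr (Or.inr hw))
    rcases hN x with hNF | hNT
    · rcases hvu' with rfl | ⟨o, ho, rfl⟩ | rfl | rfl
      · exact hne hNF.1
      · exact not_prefOver hNF.1 (not_pref_hd (plist_nc x) (by simp)) hpo1
      · exact not_prefOver hNF.1 (not_pref_hd (plist_nc x) (by simp)) hpo1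
      · exact not_prefOver hNF.1 (not_pref_hd (plist_nc x) (by simp [vprevN])) hpo1
    · rcases hvu' with rfl | ⟨o, ho, rfl⟩ | rfl | rfl
      · exact not_prefOver (msym hm hNT.2) (not_pref_hd (plist_nd x) (by simp)) hpo2
      · have hFo := h4 x hNT o (litOf_of_mem_occsOfVar ho)
        exact not_prefOver (msym hm hFo.2) (not_pref_hd (plist_pb o) (by simp)) hpo2
      · exact hne hNT.1
      · exact not_prefOver hNT.1 (not_pref_split (plist_nc_split x)
          (by simp) (by simp [vprevN])) hpo1
  | nc' x =>
    rw [plist_nc'] at hvu; simp at hvu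
    rcases hN x with hNF | hNT
    · rcases hvu with rfl | rfl
      · exact hne hNF.2
      · exact not_prefOver hNF.2 (not_pref_hd (plist_nc' x) (by simp)) hpo1
    · rcases hvu with rfl | rfl
      · exact not_prefOver (msym hm hNT.1) (not_pref_hd (plist_nd' x) (by simp)) hpo2
      · exact hne hNT.2
  | nd x =>
    rw [plist_nd] at hvu; simp at hvu
    rcases hN x with hNF | hNT
    · rcases hvu with rfl | rfl | rfl
      · exact not_prefOver hNF.2 (not_pref_hd (plist_nc' x) (by simp)) hpo2
      · have hq : p (unextN x) = some (.vv ⟨Sum.inr (F.negIdx x),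
            ⟨if x.val < F.n then 1 else 2, by
              have hc : clen F (Sum.inr (F.negIdx x)) = 2 := rfl
              rw [hc]; split <;> omega⟩⟩) := hU _
        have hpl : HGV.plist F (unextN x) =
            .vv ⟨Sum.inr (F.negIdx x), ⟨if x.val < F.n then 1 else 2, by
              have hc : clen F (Sum.inr (F.negIdx x)) = 2 := rfl
              rw [hc]; split <;> omega⟩⟩ ::
            [.nd (if (if x.val < F.n then 1 else 2) = 1 then F.varFst (F.negIdx x)
              else F.varSnd (F.negIdx x))] :=
          plist_u_inr (by by_cases hx : x.val < F.n <;> simp [hx])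
        exact not_prefOver hq (not_pref_hd hpl (by simp)) hpo2
      · exact hne (msym hm hNF.1)
    · rcases hvu with rfl | rfl | rfl
      · exact hne (msym hm hNT.2)
      · exact not_prefOver (msym hm hNT.2) (not_pref_hd (plist_nd x) (by simp [unextN])) hpo1
      · exact not_prefOver (msym hm hNT.2) (not_pref_hd (plist_nd x) (by simp)) hpo1
  | nd' x =>
    rw [plist_nd'] at hvu; simp at hvu
    rcases hN x with hNF | hNT
    · rcases hvu with rfl | rfl
      · exact not_prefOver hNF.1 (not_pref_hd (plist_nc x) (by simp)) hpo2
      · exact hne (msym hm hNF.2)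
    · rcases hvu with rfl | rfl
      · exact hne (msym hm hNT.1)
      · exact not_prefOver (msym hm hNT.1) (not_pref_hd (plist_nd' x) (by simp)) hpo1

end BWD
/-- Structure of the stable matchings of `Ĝ_φ`: a stable
matching leaves `s` and `t` unmatched, contains all edges `(u^ℓ_i, v^ℓ_i)`,
contains no consistency edge, puts every literal gadget in true or false
state, and if the gadget of `¬x` is in true state then all gadgets of `x` are
in false state.  Conversely, every matching satisfying these conditions is
stable. -/
theorem Ghat_stable_characterization (F : Formula)
    (p : HGV F → Option (HGV F)) :
    ((Ghat F).Stable p →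
      ((p HGV.s = none ∧ p HGV.t = none ∧
        (∀ q : UVIdx F, p (HGV.u q) = some (HGV.vv q)) ∧
        (∀ o : F.Occ, p (HGV.pb o) ≠ some (HGV.nc (F.litOf o)))) ∧
       (∀ x : F.Var, NegFalseH p x ∨ NegTrueH p x) ∧
       (∀ o : F.Occ, PosTrueH p o ∨ PosFalseH p o) ∧
       (∀ x : F.Var, NegTrueH p x →
          ∀ o : F.Occ, F.litOf o = x → PosFalseH p o))) ∧
    ((Ghat F).IsMatching p →
      ((p HGV.s = none ∧ p HGV.t = none ∧
        (∀ q : UVIdx F, p (HGV.u q) = some (HGV.vv q)) ∧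
        (∀ o : F.Occ, p (HGV.pb o) ≠ some (HGV.nc (F.litOf o)))) ∧
       (∀ x : F.Var, NegFalseH p x ∨ NegTrueH p x) ∧
       (∀ o : F.Occ, PosTrueH p o ∨ PosFalseH p o) ∧
       (∀ x : F.Var, NegTrueH p x →
          ∀ o : F.Occ, F.litOf o = x → PosFalseH p o)) →
      (Ghat F).Stable p) := by
  constructor
  · intro hs
    exact ⟨⟨lemS hs, lemT hs, fun q => lemU hs q, fun o => lemCE hs o _⟩,
      fun x => lemN hs x, fun o => lemP hs o, fun x hT o ho => lem4 hs x hT o ho⟩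
  · rintro hm ⟨⟨-, -, hU, -⟩, hN, hP, h4⟩
    exact bwd hm hU hN hP h4

end PopMatch
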